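/- Let f(w) = (1/2)⟨w, Aw⟩ − ⟨b, w⟩ + c be a quadratic function on ℝⁿ with A symmetric positive definite, smallest eigenvalue λ₁, largest eigenvalue λₙ, and unique minimizer x* = A⁻¹b. Let (xᵏ)ₖ≥₀ be a sequence in ℝⁿ such that for every k: if ∇f(xᵏ) = 0 then xᵏ⁺¹ = xᵏ, and if ∇f(xᵏ) ≠ 0 then f(xᵏ⁺¹) ≤ f(xᵏ − t*ₖ·∇f(xᵏ)) where t*ₖ := ‖∇f(xᵏ)‖²/⟨∇f(xᵏ), A∇f(xᵏ)⟩. Then with η := 1 − λ₁/λₙ, for all k ≥ 0, ‖xᵏ − x*‖_A ≤ (√η)ᵏ · ‖x⁰ − x*‖_A, where ‖u‖_A := √⟨u, Au⟩. -/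

import Mathlib

open Matrix


lemma rayleigh_bounds {n : ℕ} (A : Matrix (Fin n) (Fin n) ℝ) (hA : A.IsHermitian)
    (lam1 lamn : ℝ) (h1 : ∀ i, lam1 ≤ hA.eigenvalues i) (h2 : ∀ i, hA.eigenvalues i ≤ lamn)
    (v : Fin n → ℝ) :
    lam1 * (v ⬝ᵥ v) ≤ v ⬝ᵥ A.mulVec v ∧ v ⬝ᵥ A.mulVec v ≤ lamn * (v ⬝ᵥ v) := by
  classical
  set U : Matrix (Fin n) (Fin n) ℝ := (hA.eigenvectorUnitary : Matrix (Fin n) (Fin n) ℝ) with hU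
  set w : Fin n → ℝ := Uᵀ *ᵥ v with hw
  have hUU : U * Uᵀ = 1 := by
    have := (Matrix.mem_unitaryGroup_iff).mp hA.eigenvectorUnitary.2
    simpa [Matrix.star_eq_conjTranspose, Matrix.conjTranspose_eq_transpose_of_trivial] using this
  have hkey : v ⬝ᵥ A.mulVec v = ∑ i, hA.eigenvalues i * (w i)^2 := by
    conv_lhs => rw [hA.spectral_theorem, Unitary.conjStarAlgAut_apply]
    rw [Matrix.star_eq_conjTranspose, Matrix.conjTranspose_eq_transpose_of_trivial,
      ← Matrix.mulVec_mulVec, ← Matrix.mulVec_mulVec, Matrix.dotProduct_mulVec,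
      ← Matrix.mulVec_transpose]
    simp [Matrix.mulVec_diagonal, dotProduct, Finset.mul_sum]
    ring_nf
    exact Finset.sum_congr rfl fun i _ => by ring
  have hww : w ⬝ᵥ w = v ⬝ᵥ v := by
    rw [hw, Matrix.mulVec_transpose, ← Matrix.dotProduct_mulVec, Matrix.mulVec_vecMul, hUU,
      Matrix.one_mulVec]
  have hvv : v ⬝ᵥ v = ∑ i, (w i)^2 := by
    rw [← hww]; simp [dotProduct, sq]
  constructor
  · rw [hkey, hvv, Finset.mul_sum]
    exact Finset.sum_le_sum fun i _ => mul_le_mul_of_nonneg_right (h1 i) (sq_nonneg _)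
  · rw [hkey, hvv, Finset.mul_sum]
    exact Finset.sum_le_sum fun i _ => mul_le_mul_of_nonneg_right (h2 i) (sq_nonneg _)

lemma sqrt_pow_eq' (x : ℝ) (hx : 0 ≤ x) : ∀ k : ℕ, Real.sqrt (x ^ k) = Real.sqrt x ^ k
  | 0 => by simp
  | (k+1) => by rw [pow_succ, pow_succ, Real.sqrt_mul (pow_nonneg hx k), sqrt_pow_eq' x hx k]

/-- Under the same assumptions as Statement 8, with `η := 1 − λ₁/λₙ`,
the iterates satisfy `‖xᵏ − x*‖_A ≤ (√η)ᵏ ‖x⁰ − x*‖_A`, where `‖u‖_A := √⟨u, Au⟩`. -/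
theorem stmt9 {n : ℕ} (A : Matrix (Fin n) (Fin n) ℝ) (hA : A.PosDef)
    (lam1 lamn : ℝ)
    (hlam1 : IsLeast (Set.range hA.1.eigenvalues) lam1)
    (hlamn : IsGreatest (Set.range hA.1.eigenvalues) lamn)
    (b : Fin n → ℝ) (c : ℝ) (f : (Fin n → ℝ) → ℝ)
    (hf : ∀ w, f w = (1/2) * (w ⬝ᵥ A.mulVec w) - b ⬝ᵥ w + c)
    (xstar : Fin n → ℝ) (hxstar : xstar = A⁻¹.mulVec b)
    (x : ℕ → Fin n → ℝ)
    (hstep0 : ∀ k, A.mulVec (x k) - b = 0 → x (k + 1) = x k)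
    (hstep : ∀ k, A.mulVec (x k) - b ≠ 0 →
      f (x (k + 1)) ≤
        f (x k - (((A.mulVec (x k) - b) ⬝ᵥ (A.mulVec (x k) - b)) /
            ((A.mulVec (x k) - b) ⬝ᵥ A.mulVec (A.mulVec (x k) - b))) • (A.mulVec (x k) - b)))
    (η : ℝ) (hη : η = 1 - lam1 / lamn) :
    ∀ k : ℕ,
      Real.sqrt ((x k - xstar) ⬝ᵥ A.mulVec (x k - xstar)) ≤
        (Real.sqrt η) ^ k * Real.sqrt ((x 0 - xstar) ⬝ᵥ A.mulVec (x 0 - xstar)) := by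
  have hsym : A.IsHermitian := hA.1
  have hAt : Aᵀ = A := by
    exact (by simpa [Matrix.conjTranspose_eq_transpose_of_trivial] using hsym : A.IsSymm)
  have hsymdot : ∀ u v : Fin n → ℝ, u ⬝ᵥ A.mulVec v = v ⬝ᵥ A.mulVec u := by
    intro u v
    rw [Matrix.dotProduct_mulVec, ← Matrix.mulVec_transpose, hAt, dotProduct_comm]
  obtain ⟨i1, hi1⟩ := hlam1.1
  have hlam1pos : 0 < lam1 := hi1 ▸ hA.eigenvalues_pos i1
  obtain ⟨in', hin⟩ := hlamn.1
  have hlamnpos : 0 < lamn := hin ▸ hA.eigenvalues_pos in'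
  have hle : lam1 ≤ lamn := hlamn.2 hlam1.1
  have hηnn : 0 ≤ η := by
    rw [hη]
    have : lam1 / lamn ≤ 1 := div_le_one_of_le₀ hle hlamnpos.le
    linarith
  have h1 : ∀ i, lam1 ≤ hsym.eigenvalues i := fun i => hlam1.2 ⟨i, rfl⟩
  have h2 : ∀ i, hsym.eigenvalues i ≤ lamn := fun i => hlamn.2 ⟨i, rfl⟩
  have hdet : IsUnit A.det := isUnit_iff_ne_zero.2 hA.det_pos.ne'
  have hAx : A.mulVec xstar = b := by
    rw [hxstar, Matrix.mulVec_mulVec, Matrix.mul_nonsing_inv A hdet, Matrix.one_mulVec]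
  have hgrad : ∀ w, A.mulVec w - b = A.mulVec (w - xstar) := by
    intro w; rw [Matrix.mulVec_sub, hAx]
  have hfq : ∀ w, f w = (1/2) * ((w - xstar) ⬝ᵥ A.mulVec (w - xstar))
      + (c - (1/2) * (b ⬝ᵥ xstar)) := by
    intro w
    have e1 : (w - xstar) ⬝ᵥ A.mulVec (w - xstar)
        = w ⬝ᵥ A.mulVec w - w ⬝ᵥ b - (xstar ⬝ᵥ A.mulVec w - xstar ⬝ᵥ b) := by
      rw [Matrix.mulVec_sub, hAx, sub_dotProduct, dotProduct_sub,
        dotProduct_sub]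
    have e2 : xstar ⬝ᵥ A.mulVec w = w ⬝ᵥ b := by rw [hsymdot xstar w, hAx]
    have e3 : b ⬝ᵥ w = w ⬝ᵥ b := dotProduct_comm _ _
    have e4 : xstar ⬝ᵥ b = b ⬝ᵥ xstar := dotProduct_comm _ _
    rw [hf, e1, e2, e3, e4]; ring
  have hdnn : ∀ v : Fin n → ℝ, 0 ≤ v ⬝ᵥ v := fun v =>
    Finset.sum_nonneg fun i _ => mul_self_nonneg _
  -- key one-step inequality
  have key : ∀ k, (x (k+1) - xstar) ⬝ᵥ A.mulVec (x (k+1) - xstar)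
      ≤ η * ((x k - xstar) ⬝ᵥ A.mulVec (x k - xstar)) := by
    intro k
    set e : Fin n → ℝ := x k - xstar with he
    set g : Fin n → ℝ := A.mulVec (x k) - b with hgdef
    have hg : g = A.mulVec e := hgrad (x k)
    by_cases hg0 : g = 0
    · have hx1 : x (k+1) = x k := hstep0 k hg0
      have hAe : A.mulVec e = 0 := by rw [← hg, hg0]
      have hSk : e ⬝ᵥ A.mulVec e = 0 := by rw [hAe]; simp
      rw [hx1, ← he, hSk]
      simp
    · have h5 := hstep k hg0
      rw [hfq, hfq] at h5
      set t : ℝ := (g ⬝ᵥ g) / (g ⬝ᵥ A.mulVec g) with ht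
      have hxe : x k - t • g - xstar = e - t • g := by
        rw [he]; abel
      rw [hxe] at h5
      have hge : g ⬝ᵥ A.mulVec e = g ⬝ᵥ g := by rw [← hg]
      have heg : e ⬝ᵥ A.mulVec g = g ⬝ᵥ g := by rw [hsymdot e g, hge]
      have hP : 0 < g ⬝ᵥ A.mulVec g := by simpa using hA.dotProduct_mulVec_pos hg0
      have hG : 0 < g ⬝ᵥ g := by
        rcases lt_or_eq_of_le (hdnn g) with h | h
        · exact h
        · exact absurd ((dotProduct_self_eq_zero).mp h.symm) hg0
      have hQ : (e - t • g) ⬝ᵥ A.mulVec (e - t • g)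
          = e ⬝ᵥ A.mulVec e - 2*t*(g ⬝ᵥ g) + t^2 * (g ⬝ᵥ A.mulVec g) := by
        rw [Matrix.mulVec_sub, Matrix.mulVec_smul, sub_dotProduct,
          smul_dotProduct, dotProduct_sub, dotProduct_smul,
          dotProduct_sub, dotProduct_smul, heg, hge]
        simp [smul_eq_mul]; ring
      have hQval : (e - t • g) ⬝ᵥ A.mulVec (e - t • g)
          = e ⬝ᵥ A.mulVec e - (g ⬝ᵥ g)^2 / (g ⬝ᵥ A.mulVec g) := by
        rw [hQ, ht]; field_simp; ring
      have hray := rayleigh_bounds A hsym lam1 lamn h1 h2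
      have hlow : lam1 * (e ⬝ᵥ e) ≤ e ⬝ᵥ A.mulVec e := (hray e).1
      have hup : g ⬝ᵥ A.mulVec g ≤ lamn * (g ⬝ᵥ g) := (hray g).2
      have hSnn : 0 ≤ e ⬝ᵥ A.mulVec e :=
        le_trans (mul_nonneg hlam1pos.le (hdnn e)) hlow
      have hCS : (e ⬝ᵥ g)^2 ≤ (e ⬝ᵥ e) * (g ⬝ᵥ g) := by
        simpa [dotProduct, sq] using Finset.sum_mul_sq_le_sq_mul_sq Finset.univ e g
      have hSg : e ⬝ᵥ A.mulVec e = e ⬝ᵥ g := by rw [hg]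
      -- main inequality: (lam1/lamn) * S ≤ G²/P
      have hmain : lam1 / lamn * (e ⬝ᵥ A.mulVec e) ≤ (g ⬝ᵥ g)^2 / (g ⬝ᵥ A.mulVec g) := by
        rcases eq_or_lt_of_le hSnn with hS0 | hSpos
        · rw [← hS0, mul_zero]
          positivity
        · have hCS' : (e ⬝ᵥ A.mulVec e)^2 ≤ (e ⬝ᵥ e) * (g ⬝ᵥ g) := by rw [hSg]; exact hCS
          have h6 : lam1 * (e ⬝ᵥ A.mulVec e)^2 ≤ (e ⬝ᵥ A.mulVec e) * (g ⬝ᵥ g) :=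
            calc lam1 * (e ⬝ᵥ A.mulVec e)^2 ≤ lam1 * ((e ⬝ᵥ e) * (g ⬝ᵥ g)) :=
                  mul_le_mul_of_nonneg_left hCS' hlam1pos.le
              _ = (lam1 * (e ⬝ᵥ e)) * (g ⬝ᵥ g) := by ring
              _ ≤ (e ⬝ᵥ A.mulVec e) * (g ⬝ᵥ g) :=
                  mul_le_mul_of_nonneg_right hlow (hdnn g)
          have h7 : lam1 * (e ⬝ᵥ A.mulVec e) ≤ g ⬝ᵥ g := by
            refine le_of_mul_le_mul_right ?_ hSpos
            calc lam1 * (e ⬝ᵥ A.mulVec e) * (e ⬝ᵥ A.mulVec e)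
                = lam1 * (e ⬝ᵥ A.mulVec e)^2 := by ring
              _ ≤ (e ⬝ᵥ A.mulVec e) * (g ⬝ᵥ g) := h6
              _ = (g ⬝ᵥ g) * (e ⬝ᵥ A.mulVec e) := by ring
          rw [div_mul_eq_mul_div, div_le_div_iff₀ hlamnpos hP]
          calc lam1 * (e ⬝ᵥ A.mulVec e) * (g ⬝ᵥ A.mulVec g)
              ≤ (g ⬝ᵥ g) * (g ⬝ᵥ A.mulVec g) := mul_le_mul_of_nonneg_right h7 hP.le
            _ ≤ (g ⬝ᵥ g) * (lamn * (g ⬝ᵥ g)) := mul_le_mul_of_nonneg_left hup hG.le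
            _ = (g ⬝ᵥ g)^2 * lamn := by ring
      have hstep' : (x (k+1) - xstar) ⬝ᵥ A.mulVec (x (k+1) - xstar)
          ≤ (e - t • g) ⬝ᵥ A.mulVec (e - t • g) := by linarith
      rw [hQval] at hstep'
      rw [hη]
      calc (x (k+1) - xstar) ⬝ᵥ A.mulVec (x (k+1) - xstar)
          ≤ e ⬝ᵥ A.mulVec e - (g ⬝ᵥ g)^2 / (g ⬝ᵥ A.mulVec g) := hstep'
        _ ≤ (1 - lam1 / lamn) * (e ⬝ᵥ A.mulVec e) := by linarith
  have hmain : ∀ k, (x k - xstar) ⬝ᵥ A.mulVec (x k - xstar)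
      ≤ η^k * ((x 0 - xstar) ⬝ᵥ A.mulVec (x 0 - xstar)) := by
    intro k
    induction k with
    | zero => simp
    | succ k ih =>
      calc (x (k+1) - xstar) ⬝ᵥ A.mulVec (x (k+1) - xstar)
          ≤ η * ((x k - xstar) ⬝ᵥ A.mulVec (x k - xstar)) := key k
        _ ≤ η * (η^k * ((x 0 - xstar) ⬝ᵥ A.mulVec (x 0 - xstar))) :=
            mul_le_mul_of_nonneg_left ih hηnn
        _ = η^(k+1) * ((x 0 - xstar) ⬝ᵥ A.mulVec (x 0 - xstar)) := by ring
  intro k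
  calc Real.sqrt ((x k - xstar) ⬝ᵥ A.mulVec (x k - xstar))
      ≤ Real.sqrt (η^k * ((x 0 - xstar) ⬝ᵥ A.mulVec (x 0 - xstar))) :=
        Real.sqrt_le_sqrt (hmain k)
    _ = (Real.sqrt η) ^ k * Real.sqrt ((x 0 - xstar) ⬝ᵥ A.mulVec (x 0 - xstar)) := by
        rw [Real.sqrt_mul (pow_nonneg hηnn k), sqrt_pow_eq' η hηnn k]
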